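/- Specific heat inequality: Let s(ρ,e) be a C² entropy with s_e > 0 satisfying the convexity conditions, and let c_p := s_e^{−1}(p_ρ s_e − p_e s_ρ)/(p_ρ T_e − p_e T_ρ) and T_e := ∂T/∂e = −s_{ee}/s_e². Then c_p · T_e ≥ 1 at every (ρ,e) ∈ (0,∞)², with strict inequality c_p · T_e > 1 wherever p_e ≠ 0. In particular c_p > 0 everywhere. -/

import Mathlib

noncomputable section

open Real

/-- Partial derivative with respect to the first variable (`ρ`). -/
def D1 (f : ℝ × ℝ → ℝ) (x : ℝ × ℝ) : ℝ := fderiv ℝ f x (1, 0)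

/-- Partial derivative with respect to the second variable (`e`). -/
def D2 (f : ℝ × ℝ → ℝ) (x : ℝ × ℝ) : ℝ := fderiv ℝ f x (0, 1)

/-- The state domain `(0,∞)²`. -/
def dom : Set (ℝ × ℝ) := {x : ℝ × ℝ | 0 < x.1 ∧ 0 < x.2}

/-- `s_ρ` -/
def sRho (s : ℝ × ℝ → ℝ) : ℝ × ℝ → ℝ := D1 s

/-- `s_e` -/
def sE (s : ℝ × ℝ → ℝ) : ℝ × ℝ → ℝ := D2 s

/-- `s_{ρe}` -/
def sRhoE (s : ℝ × ℝ → ℝ) : ℝ × ℝ → ℝ := D1 (D2 s)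

/-- `s_{ee}` -/
def sEE (s : ℝ × ℝ → ℝ) : ℝ × ℝ → ℝ := D2 (D2 s)

/-- The pressure `p := -ρ² s_ρ / s_e`. -/
def press (s : ℝ × ℝ → ℝ) (x : ℝ × ℝ) : ℝ := -x.1 ^ 2 * sRho s x / sE s x

/-- The temperature `T := 1 / s_e`. -/
def temp (s : ℝ × ℝ → ℝ) (x : ℝ × ℝ) : ℝ := (sE s x)⁻¹

/-- `∂_ρ(ρ² s_ρ)` -/
def dRho2sRho (s : ℝ × ℝ → ℝ) (x : ℝ × ℝ) : ℝ :=
  deriv (fun r : ℝ => r ^ 2 * sRho s (r, x.2)) x.1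

/-- `det Σ := ∂_ρ(ρ² s_ρ)·s_{ee} - ρ² s_{ρe}²`. -/
def detSigma (s : ℝ × ℝ → ℝ) (x : ℝ × ℝ) : ℝ :=
  dRho2sRho s x * sEE s x - x.1 ^ 2 * (sRhoE s x) ^ 2

/-- `p_ρ` -/
def pRho (s : ℝ × ℝ → ℝ) : ℝ × ℝ → ℝ := D1 (press s)

/-- `p_e` -/
def pE (s : ℝ × ℝ → ℝ) : ℝ × ℝ → ℝ := D2 (press s)

/-- `T_ρ` -/
def tRho (s : ℝ × ℝ → ℝ) : ℝ × ℝ → ℝ := D1 (temp s)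

/-- `T_e` -/
def tE (s : ℝ × ℝ → ℝ) : ℝ × ℝ → ℝ := D2 (temp s)

/-- The specific heat at constant pressure
`c_p := s_e⁻¹ (p_ρ s_e - p_e s_ρ) / (p_ρ T_e - p_e T_ρ)`. -/
def cP (s : ℝ × ℝ → ℝ) (x : ℝ × ℝ) : ℝ :=
  (sE s x)⁻¹ * (pRho s x * sE s x - pE s x * sRho s x) /
    (pRho s x * tE s x - pE s x * tRho s x)

/-- The squared sound speed `c² := p_ρ - (s_ρ/s_e) p_e`. -/
def cSq (s : ℝ × ℝ → ℝ) (x : ℝ × ℝ) : ℝ := pRho s x - sRho s x / sE s x * pE s x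

/-- The convexity conditions `∂_ρ(ρ² s_ρ) < 0`, `s_{ee} < 0`, `det Σ > 0` on the domain. -/
def Convexity (s : ℝ × ℝ → ℝ) : Prop :=
  ∀ x ∈ dom, dRho2sRho s x < 0 ∧ sEE s x < 0 ∧ 0 < detSigma s x


lemma key_alg (ρ A B b c q pR pE tR tEv cp : ℝ) (hρ : 0 < ρ) (hB : 0 < B) (hc : c < 0)
    (hdet : 0 < (2*ρ*A + ρ^2*q)*c - ρ^2*b^2)
    (hpR : pR = (ρ^2*A*b - (2*ρ*A + ρ^2*q)*B)/B^2)
    (hpE : pE = ρ^2*(A*c - b*B)/B^2)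
    (htR : tR = -b/B^2) (htE : tEv = -c/B^2)
    (hcp : cp = B⁻¹ * (pR * B - pE * A) / (pR * tEv - pE * tR)) :
    1 ≤ cp * tEv ∧ (pE ≠ 0 → 1 < cp * tEv) ∧ 0 < cp := by
  have hBne : B ≠ 0 := hB.ne'
  set det : ℝ := (2*ρ*A + ρ^2*q)*c - ρ^2*b^2 with hdetdef
  set k : ℝ := A*c - b*B with hkdef
  have hN : pR * tEv - pE * tR = det / B^3 := by
    rw [hpR, hpE, htR, htE]; field_simp; ring
  have hcpt : cp * tEv = 1 + ρ^2 * k^2 / (B^2 * det) := by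
    rw [hcp, hN, hpR, hpE, htE]
    field_simp
    ring
  have htEpos : 0 < tEv := by
    rw [htE]; apply div_pos (by linarith) (by positivity)
  have h1 : 1 ≤ cp * tEv := by
    rw [hcpt]
    have : 0 ≤ ρ^2 * k^2 / (B^2 * det) := by positivity
    linarith
  refine ⟨h1, fun hpe => ?_, ?_⟩
  · have hk : k ≠ 0 := by
      intro h; apply hpe; rw [hpE, h]; simp
    rw [hcpt]
    have : 0 < ρ^2 * k^2 / (B^2 * det) := by positivity
    linarith
  · have : 0 < cp * tEv := lt_of_lt_of_le one_pos h1
    have hcpeq : cp = (cp * tEv) / tEv := by field_simp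
    rw [hcpeq]; positivity


lemma dom_open : IsOpen dom := by
  have : dom = (Set.Ioi (0:ℝ)) ×ˢ (Set.Ioi (0:ℝ)) := by
    ext x; simp [dom, Set.mem_prod]
  rw [this]; exact isOpen_Ioi.prod isOpen_Ioi


/-- **Specific heat inequality:** `c_p · T_e ≥ 1`, with strict inequality wherever `p_e ≠ 0`;
in particular `c_p > 0`. -/
theorem cP_tE_ge_one
    (s : ℝ × ℝ → ℝ) (hs : ContDiffOn ℝ 2 s dom)
    (hse : ∀ x ∈ dom, 0 < sE s x) (hconv : Convexity s) :
    ∀ x ∈ dom,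
      tE s x = -sEE s x / (sE s x) ^ 2 ∧
      1 ≤ cP s x * tE s x ∧
      (pE s x ≠ 0 → 1 < cP s x * tE s x) ∧
      0 < cP s x := by
  intro x hx
  have hρ : 0 < x.1 := hx.1
  have hxn : dom ∈ nhds x := dom_open.mem_nhds hx
  have hB : 0 < sE s x := hse x hx
  have hBne : sE s x ≠ 0 := hB.ne'
  obtain ⟨ha, hc, hdet⟩ := hconv x hx
  have hcx : ContDiffAt ℝ 2 s x := hs.contDiffAt hxn
  have hF : ContDiffAt ℝ 1 (fderiv ℝ s) x := hcx.fderiv_right (by norm_num)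
  have hG : HasFDerivAt (fderiv ℝ s) (fderiv ℝ (fderiv ℝ s) x) x :=
    (hF.differentiableAt (by norm_num)).hasFDerivAt
  have hsymm : IsSymmSndFDerivAt ℝ s x := hcx.isSymmSndFDerivAt (by norm_num)
  set G := fderiv ℝ (fderiv ℝ s) x with hGdef
  set b := G (1,0) (0,1) with hbdef
  set c := G (0,1) (0,1) with hcdef
  set q := G (1,0) (1,0) with hqdef
  have hb2 : G ((0:ℝ),(1:ℝ)) ((1:ℝ),(0:ℝ)) = b := hsymm _ _
  have hE : HasFDerivAt (sE s)
      (((fderiv ℝ s x).comp (0 : (ℝ×ℝ) →L[ℝ] (ℝ×ℝ))) + G.flip ((0:ℝ),(1:ℝ))) x :=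
    hG.clm_apply (hasFDerivAt_const _ _)
  have hR : HasFDerivAt (sRho s)
      (((fderiv ℝ s x).comp (0 : (ℝ×ℝ) →L[ℝ] (ℝ×ℝ))) + G.flip ((1:ℝ),(0:ℝ))) x :=
    hG.clm_apply (hasFDerivAt_const _ _)
  -- second partials
  have hsEE : sEE s x = c := by
    show fderiv ℝ (sE s) x (0,1) = c
    rw [hE.fderiv]; simp; rfl
  have hsRhoE : sRhoE s x = b := by
    show fderiv ℝ (sE s) x (1,0) = b
    rw [hE.fderiv]; simp; rfl
  -- dRho2sRho
  have h0 : HasDerivAt (fun r : ℝ => ((r, x.2) : ℝ×ℝ)) (1, 0) x.1 :=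
    (hasDerivAt_id x.1).prodMk (hasDerivAt_const _ _)
  have hline : HasDerivAt (fun r : ℝ => sRho s (r, x.2))
      ((((fderiv ℝ s x).comp (0 : (ℝ×ℝ) →L[ℝ] (ℝ×ℝ))) + G.flip ((1:ℝ),(0:ℝ))) (1,0)) x.1 :=
    hR.comp_hasDerivAt x.1 h0
  have hdR : dRho2sRho s x = 2*x.1*sRho s x + x.1^2 * q := by
    rw [dRho2sRho, (show HasDerivAt (fun r : ℝ => r ^ 2 * sRho s (r, x.2)) _ x.1 from (hasDerivAt_pow 2 x.1).mul hline).deriv]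
    simp; exact Or.inl rfl
  -- temp derivative
  have hinv : HasFDerivAt (fun y => (sE s y)⁻¹)
      ((-(sE s x^2)⁻¹) • (((fderiv ℝ s x).comp (0 : (ℝ×ℝ) →L[ℝ] (ℝ×ℝ))) + G.flip ((0:ℝ),(1:ℝ)))) x :=
    (hasDerivAt_inv hBne).comp_hasFDerivAt x hE
  have htE' : tE s x = -(sE s x^2)⁻¹ * c := by
    show fderiv ℝ (temp s) x (0,1) = _
    rw [show temp s = fun y => (sE s y)⁻¹ from rfl, hinv.fderiv]; simp; exact Or.inl rfl
  have htR' : tRho s x = -(sE s x^2)⁻¹ * b := by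
    show fderiv ℝ (temp s) x (1,0) = _
    rw [show temp s = fun y => (sE s y)⁻¹ from rfl, hinv.fderiv]; simp; exact Or.inl rfl
  -- press derivative
  have hsq : HasFDerivAt (fun y : ℝ×ℝ => -(y.1 * y.1))
      (-((x.1 : ℝ) • (ContinuousLinearMap.fst ℝ ℝ ℝ) + x.1 • (ContinuousLinearMap.fst ℝ ℝ ℝ))) x :=
    (hasFDerivAt_fst.mul hasFDerivAt_fst).neg
  have hnum := hsq.mul hR
  have hfun : press s = fun y : ℝ×ℝ => (-(y.1*y.1) * sRho s y) * (sE s y)⁻¹ := by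
    funext y; simp [press, div_eq_mul_inv, pow_two]
  have hpress : HasFDerivAt (fun y : ℝ×ℝ => (-(y.1*y.1) * sRho s y) * (sE s y)⁻¹) _ x := hnum.mul hinv
  rw [← hfun] at hpress
  have hpR' : pRho s x = (x.1^2*(sRho s x)*b - (2*x.1*(sRho s x) + x.1^2*q)*(sE s x))/(sE s x)^2 := by
    show fderiv ℝ (press s) x (1,0) = _
    rw [hpress.fderiv]; simp
    field_simp
    ring
  have hpE' : pE s x = x.1^2*((sRho s x)*c - b*(sE s x))/(sE s x)^2 := by
    show fderiv ℝ (press s) x (0,1) = _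
    rw [hpress.fderiv]; simp [hb2]
    field_simp
    ring
  have hdet' : 0 < (2*x.1*(sRho s x) + x.1^2*q)*c - x.1^2*b^2 := by
    have := hdet
    rw [detSigma, hsEE, hsRhoE, hdR] at this
    linarith [this]
  have key := key_alg x.1 (sRho s x) (sE s x) b c q (pRho s x) (pE s x) (tRho s x) (tE s x)
      (cP s x) hρ hB (by rw [hsEE] at hc; exact hc) hdet'
      (by rw [hpR']) (by rw [hpE']) (by rw [htR']; ring) (by rw [htE']; ring) (by unfold cP; exact rfl)
  refine ⟨?_, key.1, key.2.1, key.2.2⟩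
  rw [htE', hsEE]; ring
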